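/- arXiv:1108.0216 — 3 statements merged into one kernel-verified Lean document; each statement's English description precedes it below -/
import Mathlib

section
/- Let m ≥ 1 and let F₁, G₁, …, F_m, G_m be lifts of orientation-preserving circle homeomorphisms. If the m-fold product of commutators [F₁,G₁] ∘ [F₂,G₂] ∘ ⋯ ∘ [F_m,G_m] equals the translation T_a for some real number a, then |a| < 2m − 1. -/
/-- A lift of an orientation-preserving circle homeomorphism: a strictly increasing
bijection `F : ℝ → ℝ` with `F (x + 1) = F x + 1` for all `x`. -/
def IsCircleLift (F : ℝ → ℝ) : Prop :=
  StrictMono F ∧ Function.Bijective F ∧ ∀ x : ℝ, F (x + 1) = F x + 1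

/-- The commutator `[F, G] = F ∘ G ∘ F⁻¹ ∘ G⁻¹` of two bijections of `ℝ`. -/
noncomputable def circleComm (F G : ℝ → ℝ) : ℝ → ℝ :=
  F ∘ G ∘ Function.invFun F ∘ Function.invFun G

namespace WoodAux

lemma lift_add_int {F : ℝ → ℝ} (hF : IsCircleLift F) (x : ℝ) (n : ℤ) :
    F (x + n) = F x + n := by
  induction n using Int.induction_on with
  | zero => simp
  | succ k ih =>
      have h := hF.2.2 (x + k)
      push_cast
      push_cast at ih
      rw [← add_assoc, h, ih]; ring
  | pred k ih =>
      have h := hF.2.2 (x + (-(k : ℝ) - 1))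
      have e : x + (-(k : ℝ) - 1) + 1 = x + (-(k : ℝ)) := by ring
      rw [e] at h
      push_cast at ih ⊢
      linarith [h, ih]

lemma lift_var {F : ℝ → ℝ} (hF : IsCircleLift F) (x y : ℝ) :
    F x - x < F y - y + 1 := by
  set k : ℤ := ⌈x - y⌉ with hk
  have h1 : x ≤ y + k := by
    have := Int.le_ceil (x - y); rw [← hk] at this; linarith
  have h2 : (k : ℝ) < x - y + 1 := by
    have := Int.ceil_lt_add_one (x - y); rw [← hk] at this; linarith
  have h3 : F x ≤ F (y + k) := hF.1.monotone h1
  rw [lift_add_int hF] at h3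
  linarith

lemma lift_continuous {F : ℝ → ℝ} (hF : IsCircleLift F) : Continuous F :=
  (StrictMono.orderIsoOfSurjective F hF.1 hF.2.1.2).continuous

lemma exists_max_disp {F : ℝ → ℝ} (hF : IsCircleLift F) :
    ∃ z : ℝ, ∀ w : ℝ, F w - w ≤ F z - z := by
  have hc : Continuous fun w : ℝ => F w - w := (lift_continuous hF).sub continuous_id
  obtain ⟨z, _, hz⟩ := (isCompact_Icc : IsCompact (Set.Icc (0:ℝ) 1)).exists_isMaxOn
    (Set.nonempty_Icc.mpr (by norm_num : (0:ℝ) ≤ 1)) hc.continuousOn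
  refine ⟨z, fun w => ?_⟩
  have hfr : F w - w = F (Int.fract w) - Int.fract w := by
    have : F (Int.fract w + ⌊w⌋) = F (Int.fract w) + ⌊w⌋ := lift_add_int hF _ _
    rw [show Int.fract w + (⌊w⌋ : ℝ) = w by rw [Int.fract]; ring] at this
    rw [this, Int.fract]; ring
  rw [hfr]
  exact hz ⟨Int.fract_nonneg w, (Int.fract_lt_one w).le⟩

lemma exists_min_disp {F : ℝ → ℝ} (hF : IsCircleLift F) :
    ∃ z : ℝ, ∀ w : ℝ, F z - z ≤ F w - w := by
  have hc : Continuous fun w : ℝ => F w - w := (lift_continuous hF).sub continuous_id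
  obtain ⟨z, _, hz⟩ := (isCompact_Icc : IsCompact (Set.Icc (0:ℝ) 1)).exists_isMinOn
    (Set.nonempty_Icc.mpr (by norm_num : (0:ℝ) ≤ 1)) hc.continuousOn
  refine ⟨z, fun w => ?_⟩
  have hfr : F w - w = F (Int.fract w) - Int.fract w := by
    have : F (Int.fract w + ⌊w⌋) = F (Int.fract w) + ⌊w⌋ := lift_add_int hF _ _
    rw [show Int.fract w + (⌊w⌋ : ℝ) = w by rw [Int.fract]; ring] at this
    rw [this, Int.fract]; ring
  rw [hfr]
  exact hz ⟨Int.fract_nonneg w, (Int.fract_lt_one w).le⟩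

lemma inv_lift {F : ℝ → ℝ} (hF : IsCircleLift F) : IsCircleLift (Function.invFun F) := by
  obtain ⟨hm, hbij, hper⟩ := hF
  have hli : Function.LeftInverse (Function.invFun F) F := Function.leftInverse_invFun hbij.1
  have hri : Function.RightInverse (Function.invFun F) F := Function.rightInverse_invFun hbij.2
  refine ⟨?_, ⟨hri.injective, hli.surjective⟩, ?_⟩
  · intro x y hxy
    have : F (Function.invFun F x) < F (Function.invFun F y) := by
      rw [hri x, hri y]; exact hxy
    exact hm.lt_iff_lt.mp this
  · intro x
    apply hbij.1
    rw [hri, hper, hri]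

lemma comp_lift {F G : ℝ → ℝ} (hF : IsCircleLift F) (hG : IsCircleLift G) :
    IsCircleLift (F ∘ G) := by
  refine ⟨hF.1.comp hG.1, hF.2.1.comp hG.2.1, fun x => ?_⟩
  simp only [Function.comp_apply, hG.2.2, hF.2.2]

lemma comm_lift {F G : ℝ → ℝ} (hF : IsCircleLift F) (hG : IsCircleLift G) :
    IsCircleLift (circleComm F G) :=
  comp_lift hF (comp_lift hG (comp_lift (inv_lift hF) (inv_lift hG)))

lemma comm_apply {F G : ℝ → ℝ} (hF : IsCircleLift F) (hG : IsCircleLift G) (z : ℝ) :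
    circleComm F G (G (F z)) = F (G z) := by
  unfold circleComm
  simp only [Function.comp_apply]
  rw [Function.leftInverse_invFun hG.2.1.1 (F z), Function.leftInverse_invFun hF.2.1.1 z]

lemma comm_exists_lt {F G : ℝ → ℝ} (hF : IsCircleLift F) (hG : IsCircleLift G) :
    ∃ x : ℝ, circleComm F G x < x + 1 := by
  obtain ⟨z, hz⟩ := exists_max_disp hF
  refine ⟨G (F z), ?_⟩
  rw [comm_apply hF hG]
  have h1 : F (G z) - G z ≤ F z - z := hz (G z)
  have h2 : G z - z < G (F z) - F z + 1 := lift_var hG z (F z)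
  linarith

lemma comm_exists_gt {F G : ℝ → ℝ} (hF : IsCircleLift F) (hG : IsCircleLift G) :
    ∃ x : ℝ, x - 1 < circleComm F G x := by
  obtain ⟨z, hz⟩ := exists_min_disp hF
  refine ⟨G (F z), ?_⟩
  rw [comm_apply hF hG]
  have h1 : F z - z ≤ F (G z) - G z := hz (G z)
  have h2 : G (F z) - F z < G z - z + 1 := lift_var hG (F z) z
  linarith

lemma comm_lt_two {F G : ℝ → ℝ} (hF : IsCircleLift F) (hG : IsCircleLift G) (x : ℝ) :
    circleComm F G x < x + 2 := by
  obtain ⟨x₀, hx₀⟩ := comm_exists_lt hF hG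
  have := lift_var (comm_lift hF hG) x x₀
  linarith

lemma comm_gt_two {F G : ℝ → ℝ} (hF : IsCircleLift F) (hG : IsCircleLift G) (x : ℝ) :
    x - 2 < circleComm F G x := by
  obtain ⟨x₀, hx₀⟩ := comm_exists_gt hF hG
  have := lift_var (comm_lift hF hG) x₀ x
  linarith

lemma foldr_upper (L : List (ℝ → ℝ)) (hne : L ≠ [])
    (h2 : ∀ C ∈ L, ∀ x : ℝ, C x < x + 2) (h1 : ∀ C ∈ L, ∃ x : ℝ, C x < x + 1) :
    ∃ y : ℝ, (L.foldr (· ∘ ·) id) y < y + (2 * (L.length : ℝ) - 1) := by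
  induction L with
  | nil => exact absurd rfl hne
  | cons C L' ih =>
    cases L' with
    | nil =>
        obtain ⟨x, hx⟩ := h1 C (List.mem_cons_self)
        refine ⟨x, ?_⟩
        simpa using by linarith
    | cons D L'' =>
        obtain ⟨y, hy⟩ := ih (by simp)
          (fun E hE => h2 E (List.mem_cons_of_mem _ hE))
          (fun E hE => h1 E (List.mem_cons_of_mem _ hE))
        refine ⟨y, ?_⟩
        have hC := h2 C (List.mem_cons_self) (((D :: L'').foldr (· ∘ ·) id) y)
        simp only [List.foldr_cons, Function.comp_apply, List.length_cons] at hy hC ⊢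
        push_cast at hy ⊢
        linarith

lemma foldr_lower (L : List (ℝ → ℝ)) (hne : L ≠ [])
    (h2 : ∀ C ∈ L, ∀ x : ℝ, x - 2 < C x) (h1 : ∀ C ∈ L, ∃ x : ℝ, x - 1 < C x) :
    ∃ y : ℝ, y - (2 * (L.length : ℝ) - 1) < (L.foldr (· ∘ ·) id) y := by
  induction L with
  | nil => exact absurd rfl hne
  | cons C L' ih =>
    cases L' with
    | nil =>
        obtain ⟨x, hx⟩ := h1 C (List.mem_cons_self)
        refine ⟨x, ?_⟩
        simpa using by linarith
    | cons D L'' =>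
        obtain ⟨y, hy⟩ := ih (by simp)
          (fun E hE => h2 E (List.mem_cons_of_mem _ hE))
          (fun E hE => h1 E (List.mem_cons_of_mem _ hE))
        refine ⟨y, ?_⟩
        have hC := h2 C (List.mem_cons_self) (((D :: L'').foldr (· ∘ ·) id) y)
        simp only [List.foldr_cons, Function.comp_apply, List.length_cons] at hy hC ⊢
        push_cast at hy ⊢
        linarith

end WoodAux

/-- Wood's estimate: if an `m`-fold product of commutators of lifts of
orientation-preserving circle homeomorphisms is the translation by `a`,
then `|a| < 2 m - 1`. -/
theorem wood_commutator_translation_bound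
    (m : ℕ) (hm : 1 ≤ m) (F G : Fin m → ℝ → ℝ)
    (hF : ∀ i, IsCircleLift (F i)) (hG : ∀ i, IsCircleLift (G i)) (a : ℝ)
    (h : (List.ofFn fun i => circleComm (F i) (G i)).foldr (· ∘ ·) id
        = fun x => x + a) :
    |a| < 2 * (m : ℝ) - 1 := by
  set L : List (ℝ → ℝ) := List.ofFn fun i => circleComm (F i) (G i) with hL
  have hlen : L.length = m := by simp [hL]
  have hne : L ≠ [] := by
    intro hnil
    rw [hnil] at hlen
    simp at hlen
    omega
  have hmem : ∀ C ∈ L, ∃ i, C = circleComm (F i) (G i) := by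
    intro C hC
    rw [hL, List.mem_ofFn] at hC
    obtain ⟨i, hi⟩ := hC
    exact ⟨i, hi.symm⟩
  have h2u : ∀ C ∈ L, ∀ x : ℝ, C x < x + 2 := by
    intro C hC x
    obtain ⟨i, rfl⟩ := hmem C hC
    exact WoodAux.comm_lt_two (hF i) (hG i) x
  have h1u : ∀ C ∈ L, ∃ x : ℝ, C x < x + 1 := by
    intro C hC
    obtain ⟨i, rfl⟩ := hmem C hC
    exact WoodAux.comm_exists_lt (hF i) (hG i)
  have h2l : ∀ C ∈ L, ∀ x : ℝ, x - 2 < C x := by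
    intro C hC x
    obtain ⟨i, rfl⟩ := hmem C hC
    exact WoodAux.comm_gt_two (hF i) (hG i) x
  have h1l : ∀ C ∈ L, ∃ x : ℝ, x - 1 < C x := by
    intro C hC
    obtain ⟨i, rfl⟩ := hmem C hC
    exact WoodAux.comm_exists_gt (hF i) (hG i)
  obtain ⟨y, hy⟩ := WoodAux.foldr_upper L hne h2u h1u
  obtain ⟨y', hy'⟩ := WoodAux.foldr_lower L hne h2l h1l
  rw [h] at hy hy'
  rw [hlen] at hy hy'
  simp only at hy hy'
  rw [abs_lt]
  constructor <;> linarith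
end

section
/- (Milnor–Wood inequality for flat circle bundles.) Let g ≥ 1 and let F₁, G₁, …, F_g, G_g be lifts of orientation-preserving circle homeomorphisms. If the product of commutators [F₁,G₁] ∘ ⋯ ∘ [F_g,G_g] equals the translation T_e for some integer e, then |e| ≤ 2g − 2. -/
namespace MWaux

variable {F G : ℝ → ℝ}

lemma lift_add_one (hF : IsCircleLift F) (x : ℝ) : F (x + 1) = F x + 1 := hF.2.2 x

lemma lift_add_int (hF : IsCircleLift F) (n : ℤ) (x : ℝ) : F (x + n) = F x + n := by
  induction n using Int.induction_on with
  | zero => simp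
  | succ k ih =>
      have h1 : (x + ((k : ℤ) + 1 : ℤ) : ℝ) = (x + ((k : ℤ) : ℝ)) + 1 := by push_cast; ring
      rw [h1, hF.2.2, ih]
      push_cast
      ring_nf
  | pred k ih =>
      have h2 := hF.2.2 (x + ((-(k : ℤ) - 1 : ℤ) : ℝ))
      have h3 : (x + ((-(k : ℤ) - 1 : ℤ) : ℝ)) + 1 = x + ((-(k : ℤ) : ℤ) : ℝ) := by
        push_cast; ring
      rw [h3, ih] at h2
      push_cast at h2
      push_cast
      linarith

/-- Pointwise strict bound: the displacement of a lift varies by less than 1. -/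
lemma lift_sub_lt (hF : IsCircleLift F) (x y : ℝ) : F x - x < F y - y + 1 := by
  by_contra hcon
  push_neg at hcon
  set n : ℤ := ⌈x - y⌉ with hn
  have h1 : (x : ℝ) ≤ y + n := by
    have := Int.le_ceil (x - y); linarith
  have h2 : (y + n : ℝ) < x + 1 := by
    have := Int.ceil_lt_add_one (x - y); linarith
  have h3 : F (y + n) = F y + n := lift_add_int hF n y
  have h4 : F x ≤ F (y + n) := hF.1.monotone h1
  -- F x - x ≥ F y - y + 1 = F(y+n) - (y+n) + 1 > F(y+n) - x, so F x > F(y+n)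
  have : F x ≥ F (y + n) - (y + n) + 1 + x := by rw [h3]; linarith
  linarith

lemma comp_lift (hF : IsCircleLift F) (hG : IsCircleLift G) : IsCircleLift (F ∘ G) :=
  ⟨hF.1.comp hG.1, hF.2.1.comp hG.2.1,
    fun x => by simp only [Function.comp_apply, hG.2.2, hF.2.2]⟩

lemma inv_lift (hF : IsCircleLift F) : IsCircleLift (Function.invFun F) := by
  obtain ⟨hm, hb, hp⟩ := hF
  have hli : Function.LeftInverse (Function.invFun F) F := Function.leftInverse_invFun hb.1
  have hri : Function.RightInverse (Function.invFun F) F := Function.rightInverse_invFun hb.2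
  refine ⟨?_, ?_, ?_⟩
  · intro a b hab
    have h := hm.lt_iff_lt (a := Function.invFun F a) (b := Function.invFun F b)
    rw [hri a, hri b] at h
    exact h.mp hab
  · exact Function.bijective_iff_has_inverse.mpr ⟨F, hri, hli⟩
  · intro x
    apply hb.1
    rw [hri, hp, hri]

lemma lift_continuous (hF : IsCircleLift F) : Continuous F := by
  have := (StrictMono.orderIsoOfSurjective F hF.1 hF.2.1.2).continuous
  simpa using this

/-- The displacement of a lift attains a global minimum. -/
lemma exists_min (hG : IsCircleLift G) : ∃ x₀ : ℝ, ∀ y : ℝ, G x₀ - x₀ ≤ G y - y := by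
  have hc : Continuous fun x : ℝ => G x - x := (lift_continuous hG).sub continuous_id
  obtain ⟨x₀, _, hmin⟩ := isCompact_Icc.exists_isMinOn (Set.nonempty_Icc.2 zero_le_one)
    hc.continuousOn
  refine ⟨x₀, fun y => ?_⟩
  have hmem : y - ⌊y⌋ ∈ Set.Icc (0:ℝ) 1 := by
    constructor
    · have := Int.floor_le y; linarith
    · have := Int.lt_floor_add_one y; linarith
  have h1 : G x₀ - x₀ ≤ G (y - ⌊y⌋) - (y - ⌊y⌋) := hmin hmem
  have h2 : G ((y - ⌊y⌋) + ⌊y⌋) = G (y - ⌊y⌋) + ⌊y⌋ := lift_add_int hG ⌊y⌋ (y - ⌊y⌋)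
  have h3 : ((y - ⌊y⌋) + ⌊y⌋ : ℝ) = y := by ring
  rw [h3] at h2
  linarith

/-- The displacement of a lift attains a global maximum. -/
lemma exists_max (hG : IsCircleLift G) : ∃ x₀ : ℝ, ∀ y : ℝ, G y - y ≤ G x₀ - x₀ := by
  have hc : Continuous fun x : ℝ => G x - x := (lift_continuous hG).sub continuous_id
  obtain ⟨x₀, _, hmax⟩ := isCompact_Icc.exists_isMaxOn (Set.nonempty_Icc.2 zero_le_one)
    hc.continuousOn
  refine ⟨x₀, fun y => ?_⟩
  have hmem : y - ⌊y⌋ ∈ Set.Icc (0:ℝ) 1 := by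
    constructor
    · have := Int.floor_le y; linarith
    · have := Int.lt_floor_add_one y; linarith
  have h1 : G (y - ⌊y⌋) - (y - ⌊y⌋) ≤ G x₀ - x₀ := hmax hmem
  have h2 : G ((y - ⌊y⌋) + ⌊y⌋) = G (y - ⌊y⌋) + ⌊y⌋ := lift_add_int hG ⌊y⌋ (y - ⌊y⌋)
  have h3 : ((y - ⌊y⌋) + ⌊y⌋ : ℝ) = y := by ring
  rw [h3] at h2
  linarith

lemma comm_lift (hF : IsCircleLift F) (hG : IsCircleLift G) : IsCircleLift (circleComm F G) :=
  comp_lift hF (comp_lift hG (comp_lift (inv_lift hF) (inv_lift hG)))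

/-- A commutator of lifts moves some point by less than 1. -/
lemma comm_exists_lt (hF : IsCircleLift F) (hG : IsCircleLift G) :
    ∃ y : ℝ, circleComm F G y < y + 1 := by
  obtain ⟨x₀, hmin⟩ := exists_min hG
  have key : F (G x₀) < G (F x₀) + 1 := by
    by_contra hcon
    push_neg at hcon
    -- α(G x₀) ≥ α(x₀) + 1, contradiction with lift_sub_lt
    have h1 : G x₀ - x₀ ≤ G (F x₀) - F x₀ := hmin (F x₀)
    have h2 : F (G x₀) - G x₀ < F x₀ - x₀ + 1 := lift_sub_lt hF (G x₀) x₀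
    linarith
  refine ⟨G (F x₀), ?_⟩
  have hgi : Function.invFun G (G (F x₀)) = F x₀ :=
    Function.leftInverse_invFun hG.2.1.1 (F x₀)
  have hfi : Function.invFun F (F x₀) = x₀ :=
    Function.leftInverse_invFun hF.2.1.1 x₀
  simpa [circleComm, Function.comp, hgi, hfi] using key

/-- A commutator of lifts moves some point by more than -1. -/
lemma comm_exists_gt (hF : IsCircleLift F) (hG : IsCircleLift G) :
    ∃ y : ℝ, y - 1 < circleComm F G y := by
  obtain ⟨x₀, hmax⟩ := exists_max hG
  have key : G (F x₀) - 1 < F (G x₀) := by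
    by_contra hcon
    push_neg at hcon
    have h1 : G (F x₀) - F x₀ ≤ G x₀ - x₀ := hmax (F x₀)
    have h2 : F x₀ - x₀ < F (G x₀) - G x₀ + 1 := lift_sub_lt hF x₀ (G x₀)
    linarith
  refine ⟨G (F x₀), ?_⟩
  have hgi : Function.invFun G (G (F x₀)) = F x₀ :=
    Function.leftInverse_invFun hG.2.1.1 (F x₀)
  have hfi : Function.invFun F (F x₀) = x₀ :=
    Function.leftInverse_invFun hF.2.1.1 x₀
  simpa [circleComm, Function.comp, hgi, hfi] using key

/-- A commutator of lifts moves every point by less than 2. -/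
lemma comm_lt_two (hF : IsCircleLift F) (hG : IsCircleLift G) (x : ℝ) :
    circleComm F G x < x + 2 := by
  obtain ⟨y, hy⟩ := comm_exists_lt hF hG
  have := lift_sub_lt (comm_lift hF hG) x y
  linarith

/-- A commutator of lifts moves every point by more than -2. -/
lemma comm_gt_two (hF : IsCircleLift F) (hG : IsCircleLift G) (x : ℝ) :
    x - 2 < circleComm F G x := by
  obtain ⟨y, hy⟩ := comm_exists_gt hF hG
  have := lift_sub_lt (comm_lift hF hG) y x
  linarith

lemma fold_lt (L : List (ℝ → ℝ))
    (hL : ∀ c ∈ L, (∃ y : ℝ, c y < y + 1) ∧ (∀ x : ℝ, c x < x + 2)) (hne : L ≠ []) :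
    ∃ y : ℝ, (L.foldr (· ∘ ·) id) y < y + (2 * L.length - 1 : ℝ) := by
  induction L with
  | nil => exact absurd rfl hne
  | cons c L' ih =>
      by_cases hL' : L' = []
      · subst hL'
        obtain ⟨y, hy⟩ := (hL c (by simp)).1
        exact ⟨y, by simpa using by linarith⟩
      · obtain ⟨y, hy⟩ := ih (fun d hd => hL d (List.mem_cons_of_mem _ hd)) hL'
        refine ⟨y, ?_⟩
        have h2 := (hL c (by simp)).2 (L'.foldr (· ∘ ·) id y)
        simp only [List.foldr_cons, Function.comp_apply, List.length_cons]
        push_cast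
        linarith

lemma fold_gt (L : List (ℝ → ℝ))
    (hL : ∀ c ∈ L, (∃ y : ℝ, y - 1 < c y) ∧ (∀ x : ℝ, x - 2 < c x)) (hne : L ≠ []) :
    ∃ y : ℝ, y - (2 * L.length - 1 : ℝ) < (L.foldr (· ∘ ·) id) y := by
  induction L with
  | nil => exact absurd rfl hne
  | cons c L' ih =>
      by_cases hL' : L' = []
      · subst hL'
        obtain ⟨y, hy⟩ := (hL c (by simp)).1
        exact ⟨y, by simpa using by linarith⟩
      · obtain ⟨y, hy⟩ := ih (fun d hd => hL d (List.mem_cons_of_mem _ hd)) hL'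
        refine ⟨y, ?_⟩
        have h2 := (hL c (by simp)).2 (L'.foldr (· ∘ ·) id y)
        simp only [List.foldr_cons, Function.comp_apply, List.length_cons]
        push_cast
        linarith

end MWaux

/-- The Milnor–Wood inequality for flat circle bundles: if a `g`-fold product of
commutators of lifts of orientation-preserving circle homeomorphisms is the
translation by an integer `e` (the Euler number), then `|e| ≤ 2 g - 2`. -/
theorem milnor_wood_inequality
    (g : ℕ) (hg : 1 ≤ g) (F G : Fin g → ℝ → ℝ)
    (hF : ∀ i, IsCircleLift (F i)) (hG : ∀ i, IsCircleLift (G i)) (e : ℤ)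
    (h : (List.ofFn fun i => circleComm (F i) (G i)).foldr (· ∘ ·) id
        = fun x => x + (e : ℝ)) :
    |e| ≤ 2 * (g : ℤ) - 2 := by
  set L : List (ℝ → ℝ) := List.ofFn fun i => circleComm (F i) (G i) with hLdef
  have hlen : L.length = g := by simp [hLdef]
  have hne : L ≠ [] := by
    intro hnil
    rw [hnil] at hlen
    simp at hlen
    omega
  have hmem : ∀ c ∈ L, ∃ i, c = circleComm (F i) (G i) := by
    intro c hc
    rw [hLdef, List.mem_ofFn] at hc
    obtain ⟨i, hi⟩ := hc
    exact ⟨i, hi.symm⟩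
  -- upper bound
  have hub : (e : ℝ) < 2 * g - 1 := by
    obtain ⟨y, hy⟩ := MWaux.fold_lt L
      (fun c hc => by
        obtain ⟨i, rfl⟩ := hmem c hc
        exact ⟨MWaux.comm_exists_lt (hF i) (hG i), MWaux.comm_lt_two (hF i) (hG i)⟩) hne
    rw [h] at hy
    rw [hlen] at hy
    change y + (e : ℝ) < y + (2 * (g : ℝ) - 1) at hy
    linarith
  have hlb : -(2 * (g : ℝ) - 1) < (e : ℝ) := by
    obtain ⟨y, hy⟩ := MWaux.fold_gt L
      (fun c hc => by
        obtain ⟨i, rfl⟩ := hmem c hc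
        exact ⟨MWaux.comm_exists_gt (hF i) (hG i), MWaux.comm_gt_two (hF i) (hG i)⟩) hne
    rw [h] at hy
    rw [hlen] at hy
    change y - (2 * (g : ℝ) - 1) < y + (e : ℝ) at hy
    linarith
  have h1 : e < 2 * (g : ℤ) - 1 := by exact_mod_cast hub
  have h2 : -(2 * (g : ℤ) - 1) < e := by exact_mod_cast hlb
  rw [abs_le]
  omega
end

section
/- (Benzécri's turning-number estimate.) Let v : [0,1] → ℝ² be a continuous path with v(t) ≠ 0 for all t (for instance the velocity of a smooth immersion), and let A ∈ GL(2,ℝ) with det A > 0 (the linear part of an orientation-preserving affine transformation of the plane). Suppose θ, φ : [0,1] → ℝ are continuous functions such that v(t) = ‖v(t)‖·(cos θ(t), sin θ(t)) and A v(t) = ‖A v(t)‖·(cos φ(t), sin φ(t)) for all t ∈ [0,1]. Then |(θ(1) − θ(0)) − (φ(1) − φ(0))| < π; that is, the turning of a nonvanishing plane path and the turning of its image under an orientation-preserving affine transformation differ by less than π. -/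
/-- The Euclidean length of a vector in the plane. -/
noncomputable def planeNorm (p : ℝ × ℝ) : ℝ :=
  Real.sqrt (p.1 ^ 2 + p.2 ^ 2)

/-- The action of a `2 × 2` matrix on the plane. -/
def matApply (A : Matrix (Fin 2) (Fin 2) ℝ) (p : ℝ × ℝ) : ℝ × ℝ :=
  (A 0 0 * p.1 + A 0 1 * p.2, A 1 0 * p.1 + A 1 1 * p.2)

/-- A continuous function on `[0,1]` whose cosine is everywhere positive
cannot change by `π` or more. -/
lemma abs_sub_lt_pi_of_cos_pos {ψ : ℝ → ℝ} (hc : ContinuousOn ψ (Set.Icc 0 1))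
    (hpos : ∀ t ∈ Set.Icc (0 : ℝ) 1, 0 < Real.cos (ψ t)) :
    |ψ 1 - ψ 0| < Real.pi := by
  have hπ := Real.pi_pos
  have h0 : (0:ℝ) ∈ Set.Icc (0:ℝ) 1 := by norm_num
  by_contra hcon
  push_neg at hcon
  set k : ℤ := round (ψ 0 / (2 * Real.pi)) with hkdef
  have hb : |ψ 0 - k * (2 * Real.pi)| ≤ Real.pi := by
    have h2 := abs_sub_round (ψ 0 / (2 * Real.pi))
    have h2π : (0:ℝ) < 2 * Real.pi := by linarith
    rw [abs_sub_le_iff] at h2 ⊢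
    constructor
    · have := h2.1
      rw [div_sub' (ne_of_gt h2π), div_le_iff₀ h2π] at this
      nlinarith [this]
    · have := h2.2
      rw [sub_div' (ne_of_gt h2π), div_le_iff₀ h2π] at this
      nlinarith [this]
  have hcos0 : 0 < Real.cos (ψ 0 - k * (2 * Real.pi)) := by
    rw [Real.cos_sub_int_mul_two_pi]
    exact hpos 0 h0
  have hlt : |ψ 0 - k * (2 * Real.pi)| < Real.pi / 2 := by
    by_contra hge
    push_neg at hge
    have : Real.cos |ψ 0 - k * (2 * Real.pi)| ≤ 0 :=
      Real.cos_nonpos_of_pi_div_two_le_of_le hge (by linarith)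
    rw [Real.cos_abs] at this
    linarith
  rw [abs_lt] at hlt
  rcases le_abs.mp hcon with hge | hge
  · -- ψ 1 - ψ 0 ≥ π : cross the value m = π/2 + k·2π
    have hm0 : ψ 0 ≤ Real.pi / 2 + k * (2 * Real.pi) := by linarith [hlt.2]
    have hm1 : Real.pi / 2 + k * (2 * Real.pi) ≤ ψ 1 := by linarith [hlt.1]
    obtain ⟨t, ht, hψt⟩ := intermediate_value_Icc (by norm_num : (0:ℝ) ≤ 1) hc ⟨hm0, hm1⟩
    have : Real.cos (ψ t) = 0 := by
      rw [hψt, Real.cos_add_int_mul_two_pi, Real.cos_pi_div_two]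
    linarith [hpos t ht]
  · -- ψ 0 - ψ 1 ≥ π : cross the value m = -π/2 + k·2π
    have hm0 : -(Real.pi / 2) + k * (2 * Real.pi) ≤ ψ 0 := by linarith [hlt.1]
    have hm1 : ψ 1 ≤ -(Real.pi / 2) + k * (2 * Real.pi) := by linarith [hlt.2]
    obtain ⟨t, ht, hψt⟩ := intermediate_value_Icc' (by norm_num : (0:ℝ) ≤ 1) hc ⟨hm1, hm0⟩
    have : Real.cos (ψ t) = 0 := by
      rw [hψt, Real.cos_add_int_mul_two_pi]
      simp
    linarith [hpos t ht]

/-- The key pointwise computation: if `(x, y) = n (cos θ, sin θ)` and its image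
under `[[a,b],[c,d]]` is `m (cos φ, sin φ)` with positive determinant, then
`(a+d) cos (φ-θ) + (c-b) sin (φ-θ) > 0`. -/
lemma cos_sin_pos (a b c d x y n m θ φ : ℝ) (hdet : 0 < a * d - b * c)
    (hn : 0 < n) (hnsq : n ^ 2 = x ^ 2 + y ^ 2) (hm : 0 ≤ m)
    (hx : x = n * Real.cos θ) (hy : y = n * Real.sin θ)
    (hX : a * x + b * y = m * Real.cos φ) (hY : c * x + d * y = m * Real.sin φ) :
    0 < (a + d) * Real.cos (φ - θ) + (c - b) * Real.sin (φ - θ) := by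
  have hxy : 0 < x ^ 2 + y ^ 2 := by nlinarith [mul_pos hn hn]
  have e1 : (a * x + b * y) * x + (c * x + d * y) * y
      = m * n * (Real.cos φ * Real.cos θ + Real.sin φ * Real.sin θ) := by
    rw [hX, hY, hx, hy]; ring
  have e2 : x * (c * x + d * y) - y * (a * x + b * y)
      = m * n * (Real.sin φ * Real.cos θ - Real.cos φ * Real.sin θ) := by
    rw [hX, hY, hx, hy]; ring
  have e3 : (a + d) * ((a * x + b * y) * x + (c * x + d * y) * y)
      + (c - b) * (x * (c * x + d * y) - y * (a * x + b * y))
      = (a * d - b * c) * (x ^ 2 + y ^ 2)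
        + ((a * x + b * y) ^ 2 + (c * x + d * y) ^ 2) := by ring
  have hiden : n * m * ((a + d) * Real.cos (φ - θ) + (c - b) * Real.sin (φ - θ))
      = (a * d - b * c) * (x ^ 2 + y ^ 2)
        + ((a * x + b * y) ^ 2 + (c * x + d * y) ^ 2) := by
    rw [Real.cos_sub, Real.sin_sub, ← e3, e1, e2]; ring
  have hRHS : 0 < n * m * ((a + d) * Real.cos (φ - θ) + (c - b) * Real.sin (φ - θ)) := by
    rw [hiden]
    nlinarith [mul_pos hdet hxy, sq_nonneg (a * x + b * y), sq_nonneg (c * x + d * y)]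
  by_contra hle
  push_neg at hle
  nlinarith [mul_nonneg (mul_nonneg hn.le hm) (neg_nonneg.mpr hle)]

/-- Benzécri's turning-number estimate: the turning of a continuous nonvanishing
plane path and the turning of its image under an orientation-preserving linear
transformation differ by less than `π`. -/
theorem benzecri_turning_estimate
    (v : ℝ → ℝ × ℝ) (hv : ContinuousOn v (Set.Icc 0 1))
    (hvne : ∀ t ∈ Set.Icc (0 : ℝ) 1, v t ≠ 0)
    (A : Matrix (Fin 2) (Fin 2) ℝ) (hA : 0 < A.det)
    (θ φ : ℝ → ℝ)
    (hθc : ContinuousOn θ (Set.Icc 0 1)) (hφc : ContinuousOn φ (Set.Icc 0 1))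
    (hθ : ∀ t ∈ Set.Icc (0 : ℝ) 1,
      v t = planeNorm (v t) • (Real.cos (θ t), Real.sin (θ t)))
    (hφ : ∀ t ∈ Set.Icc (0 : ℝ) 1,
      matApply A (v t)
        = planeNorm (matApply A (v t)) • (Real.cos (φ t), Real.sin (φ t))) :
    |(θ 1 - θ 0) - (φ 1 - φ 0)| < Real.pi := by
  have hdet : 0 < A 0 0 * A 1 1 - A 0 1 * A 1 0 := by
    rw [Matrix.det_fin_two] at hA
    exact hA
  set p : ℝ := A 0 0 + A 1 1 with hp
  set q : ℝ := A 1 0 - A 0 1 with hq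
  have hpq : 0 < p ^ 2 + q ^ 2 := by
    rw [hp, hq]
    nlinarith [sq_nonneg (A 0 0 - A 1 1), sq_nonneg (A 0 1 + A 1 0)]
  -- pointwise positivity
  have key : ∀ t ∈ Set.Icc (0:ℝ) 1,
      0 < p * Real.cos (φ t - θ t) + q * Real.sin (φ t - θ t) := by
    intro t ht
    have hxy : 0 < (v t).1 ^ 2 + (v t).2 ^ 2 := by
      by_contra hle
      push_neg at hle
      apply hvne t ht
      have h1 : (v t).1 = 0 := by nlinarith [sq_nonneg (v t).1, sq_nonneg (v t).2]
      have h2 : (v t).2 = 0 := by nlinarith [sq_nonneg (v t).1, sq_nonneg (v t).2]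
      exact Prod.ext h1 h2
    have hn : 0 < planeNorm (v t) := by
      rw [planeNorm]
      exact Real.sqrt_pos.mpr hxy
    have hnsq : planeNorm (v t) ^ 2 = (v t).1 ^ 2 + (v t).2 ^ 2 := by
      rw [planeNorm]
      exact Real.sq_sqrt hxy.le
    have h1 := congrArg Prod.fst (hθ t ht)
    have h2 := congrArg Prod.snd (hθ t ht)
    simp only [Prod.smul_mk, smul_eq_mul] at h1 h2
    have h3 := congrArg Prod.fst (hφ t ht)
    have h4 := congrArg Prod.snd (hφ t ht)
    simp only [matApply, Prod.smul_mk, smul_eq_mul] at h3 h4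
    exact cos_sin_pos (A 0 0) (A 0 1) (A 1 0) (A 1 1) (v t).1 (v t).2
      (planeNorm (v t)) (planeNorm (matApply A (v t))) (θ t) (φ t)
      hdet hn hnsq (Real.sqrt_nonneg _) h1 h2 h3 h4
  -- choose the angle α of (p, q)
  set z : ℂ := ⟨p, q⟩ with hz
  have hzne : z ≠ 0 := by
    intro h
    rw [Complex.ext_iff] at h
    have hre : z.re = p := rfl
    have him : z.im = q := rfl
    rw [hre, him] at h
    simp only [Complex.zero_re, Complex.zero_im] at h
    rw [h.1, h.2] at hpq
    norm_num at hpq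
  set R : ℝ := ‖z‖ with hR
  have hRpos : 0 < R := norm_pos_iff.mpr hzne
  obtain ⟨α, hcosα, hsinα⟩ : ∃ α, Real.cos α = p / R ∧ Real.sin α = q / R :=
    ⟨Complex.arg z, Complex.cos_arg hzne, Complex.sin_arg z⟩
  have hψpos : ∀ t ∈ Set.Icc (0:ℝ) 1, 0 < Real.cos (φ t - θ t - α) := by
    intro t ht
    have h := key t ht
    have e : p * Real.cos (φ t - θ t) + q * Real.sin (φ t - θ t)
        = R * Real.cos (φ t - θ t - α) := by
      rw [Real.cos_sub (φ t - θ t) α, hcosα, hsinα]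
      field_simp
    rw [e] at h
    by_contra hle
    push_neg at hle
    nlinarith [mul_nonneg hRpos.le (neg_nonneg.mpr hle)]
  have hψc : ContinuousOn (fun t => φ t - θ t - α) (Set.Icc 0 1) :=
    (hφc.sub hθc).sub continuousOn_const
  have hfin := abs_sub_lt_pi_of_cos_pos hψc hψpos
  have heq : (θ 1 - θ 0) - (φ 1 - φ 0)
      = -((φ 1 - θ 1 - α) - (φ 0 - θ 0 - α)) := by ring
  rw [heq, abs_neg]
  exact hfin
end
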